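/- For all x in (0, 1), x/tan x < e^(-x²/3). -/

import Mathlib

open Real

lemma aux_f_pos : ∀ x ∈ Set.Ioo (0:ℝ) 1,
    0 < (3 - x^2) * Real.sin x - 3 * x * Real.cos x := by
  set f : ℝ → ℝ := fun x => (3 - x^2) * Real.sin x - 3 * x * Real.cos x with hf
  have hderiv : ∀ x : ℝ, HasDerivAt f (x * (Real.sin x - x * Real.cos x)) x := by
    intro x
    have h1 : HasDerivAt (fun x : ℝ => (3 - x^2) * Real.sin x)
        ((-(2*x)) * Real.sin x + (3 - x^2) * Real.cos x) x := by
      have := ((hasDerivAt_pow 2 x).const_sub 3).fun_mul (Real.hasDerivAt_sin x)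
      exact this.congr_deriv (by ring)
    have h2 : HasDerivAt (fun x : ℝ => 3 * x * Real.cos x)
        (3 * Real.cos x + 3 * x * (-Real.sin x)) x := by
      have := ((hasDerivAt_id x).const_mul 3).fun_mul (Real.hasDerivAt_cos x)
      exact this.congr_deriv (by simp [id])
    have := h1.fun_sub h2
    exact this.congr_deriv (by ring)
  have hmono : StrictMonoOn f (Set.Icc 0 1) := by
    apply strictMonoOn_of_deriv_pos (convex_Icc 0 1)
    · exact (Continuous.sub (by continuity) (by continuity)).continuousOn
    · intro x hx
      rw [interior_Icc] at hx
      rw [(hderiv x).deriv]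
      have hx1 : x < Real.pi / 2 := lt_trans hx.2 (by linarith [Real.pi_gt_three])
      have hcos : 0 < Real.cos x := Real.cos_pos_of_mem_Ioo ⟨by linarith [hx.1], hx1⟩
      have htan : x < Real.tan x := Real.lt_tan hx.1 hx1
      have : x * Real.cos x < Real.sin x := by
        have := mul_lt_mul_of_pos_right htan hcos
        rwa [Real.tan_eq_sin_div_cos, div_mul_cancel₀ _ (ne_of_gt hcos)] at this
      have : 0 < Real.sin x - x * Real.cos x := by linarith
      exact mul_pos hx.1 this
  intro x hx
  have h0 : f 0 = 0 := by simp [hf]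
  have := hmono (Set.mem_Icc.mpr ⟨le_refl 0, zero_le_one⟩)
    (Set.mem_Icc.mpr ⟨le_of_lt hx.1, le_of_lt hx.2⟩) hx.1
  rw [h0] at this
  exact this

theorem stmt_3 : ∀ x ∈ Set.Ioo (0:ℝ) 1, x / Real.tan x < Real.exp (-x^2/3) := by
  intro x hx
  obtain ⟨hx0, hx1⟩ := hx
  have hxpi : x < Real.pi / 2 := lt_trans hx1 (by linarith [Real.pi_gt_three])
  have hcos : 0 < Real.cos x := Real.cos_pos_of_mem_Ioo ⟨by linarith, hxpi⟩
  have hsin : 0 < Real.sin x := Real.sin_pos_of_pos_of_lt_pi hx0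
    (by linarith [Real.pi_gt_three])
  have hf := aux_f_pos x ⟨hx0, hx1⟩
  have h1 : x / Real.tan x < 1 - x^2/3 := by
    rw [Real.tan_eq_sin_div_cos, div_div_eq_mul_div, div_lt_iff₀ hsin]
    nlinarith
  have h2 : 1 - x^2/3 < Real.exp (-x^2/3) := by
    have hne : -x^2/3 ≠ 0 := by
      have : 0 < x^2 := by positivity
      intro h; nlinarith
    have := Real.add_one_lt_exp hne
    linarith
  linarith
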